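/- Let H be an Arf numerical semigroup and let QA(H) be the set of Arf-irreducible numerical semigroups containing H. Then H equals the intersection of the minimal elements (with respect to set inclusion) of QA(H). -/

import Mathlib

/-- A numerical semigroup: a subset of ℕ containing 0, closed under addition,
with finite complement. -/
def IsNumericalSemigroup (H : Set ℕ) : Prop :=
  0 ∈ H ∧ (∀ a ∈ H, ∀ b ∈ H, a + b ∈ H) ∧ (Hᶜ : Set ℕ).Finite

/-- An Arf numerical semigroup: for all a ≥ b ≥ c in H, a + b - c ∈ H. -/
def IsArfSemigroup (H : Set ℕ) : Prop :=
  IsNumericalSemigroup H ∧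
    ∀ a ∈ H, ∀ b ∈ H, ∀ c ∈ H, c ≤ b → b ≤ a → a + b - c ∈ H

/-- The special gaps of H. -/
def SpecialGaps (H : Set ℕ) : Set ℕ :=
  {x | x ∉ H ∧ IsNumericalSemigroup (H ∪ {x})}

/-- The Arf special gaps of H. -/
def ArfSpecialGaps (H : Set ℕ) : Set ℕ :=
  {x | x ∉ H ∧ IsArfSemigroup (H ∪ {x})}

/-- The Frobenius number of H (the largest gap; meaningful when H ≠ ℕ). -/
noncomputable def Frobenius (H : Set ℕ) : ℕ := sSup Hᶜ

/-- An irreducible numerical semigroup. -/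
def IsIrreducibleNS (H : Set ℕ) : Prop :=
  IsNumericalSemigroup H ∧
    ¬ ∃ H₁ H₂ : Set ℕ, IsNumericalSemigroup H₁ ∧ IsNumericalSemigroup H₂ ∧
      H ⊂ H₁ ∧ H ⊂ H₂ ∧ H = H₁ ∩ H₂

/-- An Arf-irreducible numerical semigroup. -/
def ArfIrreducible (H : Set ℕ) : Prop :=
  IsArfSemigroup H ∧
    ¬ ∃ H₁ H₂ : Set ℕ, IsArfSemigroup H₁ ∧ IsArfSemigroup H₂ ∧
      H ⊂ H₁ ∧ H ⊂ H₂ ∧ H = H₁ ∩ H₂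

/-- The set of Arf numerical semigroups containing H. -/
def ArfOver (H : Set ℕ) : Set (Set ℕ) := {S | IsArfSemigroup S ∧ H ⊆ S}

/-- The set of Arf-irreducible numerical semigroups containing H. -/
def QA (H : Set ℕ) : Set (Set ℕ) := {S | ArfIrreducible S ∧ H ⊆ S}

/-- A variety of numerical semigroups. -/
def IsVariety (Ψ : Set (Set ℕ)) : Prop :=
  Ψ.Nonempty ∧ (∀ S ∈ Ψ, IsNumericalSemigroup S) ∧
    (∀ S ∈ Ψ, ∀ S' : Set ℕ, IsNumericalSemigroup S' → S ⊆ S' → S' ∈ Ψ) ∧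
    (∀ S ∈ Ψ, ∀ S' ∈ Ψ, S ∩ S' ∈ Ψ)

/-- The variety generated by a family of numerical semigroups. -/
def GeneratedVariety (F : Set (Set ℕ)) : Set (Set ℕ) :=
  ⋂₀ {Ψ | IsVariety Ψ ∧ F ⊆ Ψ}

/-- An Arf numerical semigroup equals the intersection of the minimal elements of
the set QA(H) of Arf-irreducible numerical semigroups containing it. -/

lemma finite_supersets {H : Set ℕ} (hfin : (Hᶜ : Set ℕ).Finite) :
    {S : Set ℕ | H ⊆ S}.Finite := by
  have h1 : {S : Set ℕ | H ⊆ S} = compl ⁻¹' {T : Set ℕ | T ⊆ Hᶜ} := by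
    ext S
    simp only [Set.mem_setOf_eq, Set.mem_preimage]
    exact ⟨fun h => Set.compl_subset_compl.mpr h,
      fun h => by simpa using Set.compl_subset_compl.mpr h⟩
  rw [h1]
  exact hfin.finite_subsets.preimage (fun a _ b _ h => compl_injective h)

theorem eq_sInter_minimals_QA (H : Set ℕ) (hH : IsArfSemigroup H) :
    H = ⋂₀ {S | S ∈ QA H ∧ ∀ T ∈ QA H, T ⊆ S → T = S} := by
  have hfin : (Hᶜ : Set ℕ).Finite := hH.1.2.2
  apply Set.Subset.antisymm
  · intro h hh S hS
    exact hS.1.2 hh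
  · intro x hx
    by_contra hxH
    -- A maximal Arf semigroup containing H and avoiding x
    set A := {S : Set ℕ | IsArfSemigroup S ∧ H ⊆ S ∧ x ∉ S} with hAdef
    have hAfin : A.Finite := (finite_supersets hfin).subset (fun S hS => hS.2.1)
    have hAne : A.Nonempty := ⟨H, hH, subset_rfl, hxH⟩
    obtain ⟨S, hSA, hSmax⟩ := Set.Finite.exists_maximalFor id A hAfin hAne
    have hSirr : ArfIrreducible S := by
      refine ⟨hSA.1, ?_⟩
      rintro ⟨H₁, H₂, h1, h2, hs1, hs2, heq⟩
      have hxor : x ∉ H₁ ∨ x ∉ H₂ := by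
        by_contra h
        push_neg at h
        exact hSA.2.2 (heq ▸ (⟨h.1, h.2⟩ : x ∈ H₁ ∩ H₂))
      cases hxor with
      | inl h =>
          have heq1 : S = H₁ := Set.Subset.antisymm hs1.1 (hSmax ⟨h1, hSA.2.1.trans hs1.1, h⟩ hs1.1)
          exact hs1.2 heq1.symm.subset
      | inr h =>
          have heq2 : S = H₂ := Set.Subset.antisymm hs2.1 (hSmax ⟨h2, hSA.2.1.trans hs2.1, h⟩ hs2.1)
          exact hs2.2 heq2.symm.subset
    have hSQA : S ∈ QA H := ⟨hSirr, hSA.2.1⟩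
    -- A minimal element of QA H below S
    set B := {T : Set ℕ | T ∈ QA H ∧ T ⊆ S} with hBdef
    have hBfin : B.Finite := (finite_supersets hfin).subset (fun T hT => hT.1.2)
    have hBne : B.Nonempty := ⟨S, hSQA, subset_rfl⟩
    obtain ⟨T, hTB, hTmin⟩ := Set.Finite.exists_minimalFor id B hBfin hBne
    have hTminQA : T ∈ {S | S ∈ QA H ∧ ∀ T' ∈ QA H, T' ⊆ S → T' = S} := by
      refine ⟨hTB.1, fun T' hT' hsub => ?_⟩
      exact Set.Subset.antisymm hsub (hTmin ⟨hT', hsub.trans hTB.2⟩ hsub)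
    have hxT : x ∈ T := hx T hTminQA
    exact hSA.2.2 (hTB.2 hxT)
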